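/- For every m ≥ 0, the derivation D_m maps the ideal J into itself: D_m(x) ∈ J for every x ∈ J. (Hence each D_m descends to an operation on N = S ⧸ J; this is the statement that the subring N of H*(BG; ℤ/2) is closed under the Milnor operations.) -/
import Mathlib


open MvPolynomial

/-- `S = ℤ/2[a,b,c,d] ≅ H^*(BSO(3)²; ℤ/2)` with `a = w₂'`, `b = w₃'`, `c = w₂''`, `d = w₃''`. -/
noncomputable abbrev S : Type := MvPolynomial (Fin 4) (ZMod 2)

noncomputable def a : S := X 0
noncomputable def b : S := X 1
noncomputable def c : S := X 2
noncomputable def d : S := X 3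

/-- The ideal `J = (a·d + c·b, b·d² + b²·d)` of relations. -/
noncomputable def J : Ideal S := Ideal.span {a * d + c * b, b * d ^ 2 + b ^ 2 * d}

/-- `N = S ⧸ J`, the bottom line of the `E_∞`-term. -/
noncomputable abbrev N : Type := S ⧸ J

/-- The quotient map `π : S → N`. -/
noncomputable def π : S →+* N := Ideal.Quotient.mk J

/-- Values of the Milnor operations `D_m` on the generators `a, b, c, d`:
`D₀ = Q₀` with `D₀(a)=b, D₀(b)=0, D₀(c)=d, D₀(d)=0`;
`D₁ = Q₁` with `D₁(a)=ab, D₁(b)=b², D₁(c)=cd, D₁(d)=d²`;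
and for `m ≥ 2`, `D_m = a^(2^(m−1))·D_{m−1} + b^(2^(m−1))·D_{m−2}` on `a, b`,
and `D_m = c^(2^(m−1))·D_{m−1} + d^(2^(m−1))·D_{m−2}` on `c, d`. -/
noncomputable def Dvals : ℕ → Fin 4 → S
  | 0 => ![b, 0, d, 0]
  | 1 => ![a * b, b ^ 2, c * d, d ^ 2]
  | m + 2 => fun i =>
      if (i : ℕ) < 2 then
        a ^ 2 ^ (m + 1) * Dvals (m + 1) i + b ^ 2 ^ (m + 1) * Dvals m i
      else
        c ^ 2 ^ (m + 1) * Dvals (m + 1) i + d ^ 2 ^ (m + 1) * Dvals m i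

/-- The `m`-th Milnor operation `D_m` on `S ≅ H^*(BSO(3)²; ℤ/2)`, as a derivation. -/
noncomputable def D (m : ℕ) : Derivation (ZMod 2) S S :=
  MvPolynomial.mkDerivation (ZMod 2) (Dvals m)

/- auxiliary development -/


lemma h2 : (2 : S) = 0 := by
  have : ((2 : ℕ) : S) = 0 := CharP.cast_eq_zero S 2
  simpa using this

lemma r1_mem : a * d + c * b ∈ J := Ideal.subset_span (by simp)
lemma r2_mem : b * d ^ 2 + b ^ 2 * d ∈ J := Ideal.subset_span (by simp)

lemma memJ {x u v : S} (h : x = u * (a * d + c * b) + v * (b * d ^ 2 + b ^ 2 * d)) :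
    x ∈ J := by
  rw [h]
  exact add_mem (Ideal.mul_mem_left _ _ r1_mem) (Ideal.mul_mem_left _ _ r2_mem)

/-- Two-step induction principle. -/
lemma twoStep {P : ℕ → Prop} (h0 : P 0) (h1 : P 1)
    (ih : ∀ m, P m → P (m + 1) → P (m + 2)) : ∀ m, P m := by
  have key : ∀ m, P m ∧ P (m + 1) := by
    intro m
    induction m with
    | zero => exact ⟨h0, h1⟩
    | succ n hn => exact ⟨hn.2, ih n hn.1 hn.2⟩
  exact fun m => (key m).1

noncomputable def pp : ℕ → S
  | 0 => 1
  | 1 => a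
  | m + 2 => a ^ 2 ^ (m + 1) * pp (m + 1) + b ^ 2 ^ (m + 1) * pp m

noncomputable def ss : ℕ → S
  | 0 => 0
  | 1 => 1
  | m + 2 => a ^ 2 ^ (m + 1) * ss (m + 1) + b ^ 2 ^ (m + 1) * ss m

noncomputable def qq : ℕ → S
  | 0 => 1
  | 1 => c
  | m + 2 => c ^ 2 ^ (m + 1) * qq (m + 1) + d ^ 2 ^ (m + 1) * qq m

noncomputable def tt : ℕ → S
  | 0 => 0
  | 1 => 1
  | m + 2 => c ^ 2 ^ (m + 1) * tt (m + 1) + d ^ 2 ^ (m + 1) * tt m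

lemma Dvals_eq : ∀ m, Dvals m = ![b * pp m, b ^ 2 * ss m, d * qq m, d ^ 2 * tt m] := by
  apply twoStep
  · funext i
    fin_cases i <;> simp [Dvals, pp, ss, qq, tt] <;> ring
  · funext i
    fin_cases i <;> simp [Dvals, pp, ss, qq, tt] <;> ring
  · intro m ih1 ih2
    funext i
    fin_cases i <;>
      simp only [Dvals, ih1, ih2, pp, ss, qq, tt] <;>
      norm_num [Matrix.cons_val_zero, Matrix.cons_val_one] <;> ring

/-- `ww m = qq m + c * tt m` is divisible by `d²` for `m ≥ 1`. -/
lemma ww_dvd : ∀ m, d ^ 2 ∣ qq (m + 1) + c * tt (m + 1) := by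
  apply twoStep
  · show d ^ 2 ∣ qq 1 + c * tt 1
    have e : qq 1 + c * tt 1 = c * 2 := by simp only [qq, tt]; ring
    rw [e, h2, mul_zero]
    exact dvd_zero _
  · show d ^ 2 ∣ qq 2 + c * tt 2
    have e : qq 2 + c * tt 2 = d ^ 2 + (c ^ 2 * c) * 2 := by
      show qq (0 + 2) + c * tt (0 + 2) = _
      norm_num [qq, tt]
      ring
    rw [e, h2, mul_zero, add_zero]
  · intro m ih1 ih2
    have : qq (m + 3) + c * tt (m + 3) =
        c ^ 2 ^ (m + 2) * (qq (m + 2) + c * tt (m + 2)) +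
        d ^ 2 ^ (m + 2) * (qq (m + 1) + c * tt (m + 1)) := by
      show qq ((m+1) + 2) + c * tt ((m+1)+2) = _
      rw [qq, tt]; ring
    rw [this]
    exact dvd_add (Dvd.dvd.mul_left ih2 _) (Dvd.dvd.mul_left ih1 _)

/-- The "second-factor" element `G m`. -/
noncomputable def G (m : ℕ) : S := b * d * qq m + a * d ^ 2 * tt m

lemma mem_bd : (b + d) ^ 2 * (b * d) ∈ J :=
  memJ (u := 0) (v := b + d) (by ring)

lemma mem_bd2 : (a + c) ^ 2 * (b * d ^ 2) ∈ J :=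
  memJ (u := a * b * d + b * c * d) (v := a * c + c ^ 2)
    (by linear_combination (-(a * b ^ 2 * c * d) - b ^ 2 * c ^ 2 * d) * h2)

lemma mem_b2d2_ac : (a + c) * (b ^ 2 * d ^ 2) ∈ J :=
  memJ (u := b ^ 2 * d) (v := b * c) (by linear_combination (-(b ^ 3 * c * d)) * h2)

lemma mem_b2d2_bd : (b + d) * (b ^ 2 * d ^ 2) ∈ J :=
  memJ (u := 0) (v := b * d) (by ring)

lemma G_decomp (m : ℕ) : G (m + 1) =
    d * tt (m + 1) * (a * d + c * b) + b * d * (qq (m + 1) + c * tt (m + 1)) := by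
  unfold G
  linear_combination (-(b * c * d * tt (m + 1))) * h2

lemma C1 : ∀ m, (b + d) ^ 2 * G m ∈ J := by
  intro m
  match m with
  | 0 =>
    have : G 0 = b * d := by simp [G, qq, tt]
    rw [this]
    exact mem_bd
  | m + 1 =>
    rw [G_decomp]
    rw [mul_add]
    apply add_mem
    · exact Ideal.mul_mem_left _ _ (Ideal.mul_mem_left _ _ r1_mem)
    · obtain ⟨u, hu⟩ := ww_dvd m
      rw [hu]
      have : (b + d) ^ 2 * (b * d * (d ^ 2 * u)) = (d ^ 2 * u) * ((b + d) ^ 2 * (b * d)) := by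
        ring
      rw [this]
      exact Ideal.mul_mem_left _ _ mem_bd

lemma C2 (m : ℕ) : (a + c) ^ 2 * G (m + 1) ∈ J := by
  rw [G_decomp, mul_add]
  apply add_mem
  · exact Ideal.mul_mem_left _ _ (Ideal.mul_mem_left _ _ r1_mem)
  · obtain ⟨u, hu⟩ := ww_dvd m
    rw [hu]
    have : (a + c) ^ 2 * (b * d * (d ^ 2 * u)) = (d * u) * ((a + c) ^ 2 * (b * d ^ 2)) := by
      ring
    rw [this]
    exact Ideal.mul_mem_left _ _ mem_bd2

lemma pow_split (x : S) (m : ℕ) : x ^ 2 ^ (m + 1) = x ^ (2 ^ (m + 1) - 2) * x ^ 2 := by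
  rw [← pow_add]
  congr 1
  have : 2 ≤ 2 ^ (m + 1) := by
    calc 2 = 2 ^ 1 := by norm_num
    _ ≤ 2 ^ (m + 1) := Nat.pow_le_pow_right (by norm_num) (by omega)
  omega

lemma pow_split1 (x : S) (m : ℕ) : x ^ 2 ^ (m + 1) = x ^ (2 ^ (m + 1) - 1) * x := by
  rw [← pow_succ]
  congr 1
  have : 1 ≤ 2 ^ (m + 1) := Nat.one_le_two_pow
  omega

lemma frob (x y : S) (n : ℕ) : (x + y) ^ 2 ^ n = x ^ 2 ^ n + y ^ 2 ^ n :=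
  add_pow_char_pow x y 2 n

/-- `D_m r₂ ∈ J`, in the form `b²d²(ss m + tt m) ∈ J`. -/
lemma claimB : ∀ m, b ^ 2 * d ^ 2 * (ss m + tt m) ∈ J := by
  apply twoStep
  · have e : b ^ 2 * d ^ 2 * (ss 0 + tt 0) = 0 := by simp only [ss, tt]; ring
    rw [e]; exact zero_mem _
  · have e : b ^ 2 * d ^ 2 * (ss 1 + tt 1) = (b ^ 2 * d ^ 2) * 2 := by
      simp only [ss, tt]; ring
    rw [e, h2, mul_zero]; exact zero_mem _
  · intro m ih1 ih2
    have key : b ^ 2 * d ^ 2 * (ss (m + 2) + tt (m + 2)) =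
        a ^ 2 ^ (m + 1) * (b ^ 2 * d ^ 2 * (ss (m + 1) + tt (m + 1))) +
        b ^ 2 ^ (m + 1) * (b ^ 2 * d ^ 2 * (ss m + tt m)) +
        (a + c) ^ 2 ^ (m + 1) * (b ^ 2 * d ^ 2 * tt (m + 1)) +
        (b + d) ^ 2 ^ (m + 1) * (b ^ 2 * d ^ 2 * tt m) := by
      rw [frob, frob, ss, tt]
      linear_combination (-(a ^ 2 ^ (m + 1) * b ^ 2 * d ^ 2 * tt (m + 1)) -
        b ^ 2 ^ (m + 1) * b ^ 2 * d ^ 2 * tt m) * h2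
    rw [key]
    apply add_mem
    apply add_mem
    apply add_mem
    · exact Ideal.mul_mem_left _ _ ih2
    · exact Ideal.mul_mem_left _ _ ih1
    · rw [pow_split1 (a + c) m]
      have : (a + c) ^ (2 ^ (m + 1) - 1) * (a + c) * (b ^ 2 * d ^ 2 * tt (m + 1)) =
          ((a + c) ^ (2 ^ (m + 1) - 1) * tt (m + 1)) * ((a + c) * (b ^ 2 * d ^ 2)) := by ring
      rw [this]
      exact Ideal.mul_mem_left _ _ mem_b2d2_ac
    · rw [pow_split1 (b + d) m]
      have : (b + d) ^ (2 ^ (m + 1) - 1) * (b + d) * (b ^ 2 * d ^ 2 * tt m) =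
          ((b + d) ^ (2 ^ (m + 1) - 1) * tt m) * ((b + d) * (b ^ 2 * d ^ 2)) := by ring
      rw [this]
      exact Ideal.mul_mem_left _ _ mem_b2d2_bd

/-- the element `D_m r₁` in closed form -/
noncomputable def E (m : ℕ) : S :=
  b * d * (pp m + qq m) + a * d ^ 2 * tt m + c * b ^ 2 * ss m

lemma claimA : ∀ m, E m ∈ J := by
  apply twoStep
  · have e : E 0 = (b * d) * 2 := by rw [E]; simp only [pp, qq, ss, tt]; ring
    rw [e, h2, mul_zero]; exact zero_mem _
  · exact memJ (u := b + d) (v := 0) (by rw [E]; simp only [pp, qq, ss, tt]; ring)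
  · intro m ih1 ih2
    have key : E (m + 2) =
        a ^ 2 ^ (m + 1) * E (m + 1) + b ^ 2 ^ (m + 1) * E m +
        (a + c) ^ 2 ^ (m + 1) * G (m + 1) + (b + d) ^ 2 ^ (m + 1) * G m := by
      rw [frob, frob]
      show E ((m) + 2) = _
      rw [E, E, E, G, G, pp, qq, ss, tt]
      linear_combination (-(a ^ 2 ^ (m + 1) * (b * d * qq (m + 1) + a * d ^ 2 * tt (m + 1)))
        - b ^ 2 ^ (m + 1) * (b * d * qq m + a * d ^ 2 * tt m)) * h2
    rw [key]
    apply add_mem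
    apply add_mem
    apply add_mem
    · exact Ideal.mul_mem_left _ _ ih2
    · exact Ideal.mul_mem_left _ _ ih1
    · rw [pow_split (a + c) m]
      rw [mul_assoc]
      exact Ideal.mul_mem_left _ _ (C2 m)
    · rw [pow_split (b + d) m]
      rw [mul_assoc]
      exact Ideal.mul_mem_left _ _ (C1 m)

lemma D_a (m : ℕ) : D m a = b * pp m := by
  rw [D, a, mkDerivation_X, Dvals_eq]; simp
lemma D_b (m : ℕ) : D m b = b ^ 2 * ss m := by
  rw [D, b, mkDerivation_X, Dvals_eq]; rfl
lemma D_c (m : ℕ) : D m c = d * qq m := by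
  rw [D, c, mkDerivation_X, Dvals_eq]; simp
lemma D_d (m : ℕ) : D m d = d ^ 2 * tt m := by
  rw [D, d, mkDerivation_X, Dvals_eq]; rfl

lemma D_r1 (m : ℕ) : D m (a * d + c * b) ∈ J := by
  have : D m (a * d + c * b) = E m := by
    rw [map_add, Derivation.leibniz, Derivation.leibniz, D_a, D_b, D_c, D_d,
      smul_eq_mul, smul_eq_mul, smul_eq_mul, smul_eq_mul, E]
    ring
  rw [this]
  exact claimA m

lemma D_r2 (m : ℕ) : D m (b * d ^ 2 + b ^ 2 * d) ∈ J := by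
  have : D m (b * d ^ 2 + b ^ 2 * d) = b ^ 2 * d ^ 2 * (ss m + tt m) +
      (2 : S) * (b * d ^ 3 * tt m + b ^ 3 * d * ss m) := by
    rw [map_add, Derivation.leibniz, Derivation.leibniz,
      Derivation.leibniz_pow, Derivation.leibniz_pow, D_b, D_d]
    push_cast
    simp only [smul_eq_mul, nsmul_eq_mul]
    push_cast
    ring
  rw [this, h2, zero_mul, add_zero]
  exact claimB m

theorem stmt_15 (m : ℕ) (x : S) (hx : x ∈ J) : D m x ∈ J := by
  rw [J, Ideal.mem_span_pair] at hx
  obtain ⟨u, v, huv⟩ := hx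
  rw [← huv, map_add, Derivation.leibniz, Derivation.leibniz]
  simp only [smul_eq_mul]
  apply add_mem
  · exact add_mem (Ideal.mul_mem_left _ _ (D_r1 m)) (Ideal.mul_mem_right _ _ r1_mem)
  · exact add_mem (Ideal.mul_mem_left _ _ (D_r2 m)) (Ideal.mul_mem_right _ _ r2_mem)
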